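/- If ∑ aₙ diverges with positive terms aₙ, then the sequence ζₙ = (1/aₙ)·∑_{k=0}^{n} a_k satisfies ζₙ·(aₙ/aₙ₊₁) − ζₙ₊₁ = −1 ≤ 0 for all n, and moreover ∑ 1/ζₙ = ∑ aₙ/(∑_{k=0}^{n} a_k) diverges. -/

import Mathlib

open Filter Finset

theorem stmt_12 (a : ℕ → ℝ) (ha : ∀ n, 0 < a n) (hdiv : ¬ Summable a) :
    (∀ n, ((∑ k ∈ Finset.range (n + 1), a k) / a n) * (a n / a (n + 1))
        - (∑ k ∈ Finset.range (n + 2), a k) / a (n + 1) = -1) ∧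
    ¬ Summable (fun n => a n / ∑ k ∈ Finset.range (n + 1), a k) := by
  set S : ℕ → ℝ := fun n => ∑ k ∈ Finset.range n, a k with hSdef
  have hSsucc : ∀ n, S (n + 1) = S n + a n := fun n => Finset.sum_range_succ a n
  have hSpos : ∀ n, 0 < S (n + 1) := fun n =>
    Finset.sum_pos (fun i _ => ha i) (by simp)
  have hSmono : Monotone S := monotone_nat_of_le_succ fun n => by
    rw [hSsucc]; linarith [(ha n).le, ha n]
  constructor
  · intro n
    have h1 : a n ≠ 0 := (ha n).ne'
    have h2 : a (n + 1) ≠ 0 := (ha (n + 1)).ne'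
    have : (∑ k ∈ Finset.range (n + 2), a k) = (∑ k ∈ Finset.range (n + 1), a k) + a (n + 1) :=
      Finset.sum_range_succ a (n + 1)
    rw [this]
    field_simp
    ring
  · intro hs
    -- S tends to atTop
    have hStop : Tendsto S atTop atTop := by
      have := (not_summable_iff_tendsto_nat_atTop_of_nonneg (fun n => (ha n).le)).mp hdiv
      exact this
    set f : ℕ → ℝ := fun n => a n / S (n + 1) with hfdef
    set T : ℕ → ℝ := fun n => ∑ k ∈ Finset.range n, f k with hTdef
    have hT : CauchySeq T := (hs.hasSum.tendsto_sum_nat).cauchySeq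
    obtain ⟨N, hN⟩ := Metric.cauchySeq_iff'.mp hT (1/2) (by norm_num)
    -- choose n ≥ N with S n ≥ 2 * S N
    obtain ⟨n, hn1, hn2⟩ := ((hStop.eventually_ge_atTop (2 * S N + 1)).and
      (eventually_ge_atTop N)).exists
    have hSn : 0 < S n := by nlinarith [hSmono (Nat.zero_le N), show S 0 = 0 from rfl]
    have hsum : T n - T N = ∑ k ∈ Finset.Ico N n, f k := by
      rw [hTdef]
      simp only
      rw [← Finset.sum_Ico_eq_sub _ hn2]
    have hlow : ∀ k ∈ Finset.Ico N n, a k / S n ≤ f k := by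
      intro k hk
      have hk2 := (Finset.mem_Ico.mp hk).2
      have : S (k + 1) ≤ S n := hSmono hk2
      exact div_le_div_of_nonneg_left (ha k).le (hSpos k) this
    have h2 : (S n - S N) / S n ≤ T n - T N := by
      rw [hsum]
      calc (S n - S N) / S n = ∑ k ∈ Finset.Ico N n, a k / S n := by
            rw [← Finset.sum_div, Finset.sum_Ico_eq_sub _ hn2]
        _ ≤ ∑ k ∈ Finset.Ico N n, f k := Finset.sum_le_sum hlow
    have hSN : 0 ≤ S N := by
      have : S 0 ≤ S N := hSmono (Nat.zero_le N)
      simpa [show S 0 = 0 from rfl] using this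
    have hhalf : (1:ℝ)/2 ≤ (S n - S N) / S n := by
      rw [div_le_div_iff₀ (by norm_num) hSn]
      nlinarith
    have := hN n hn2
    rw [Real.dist_eq, abs_lt] at this
    linarith [this.2]
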